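/- Let d ≥ 4 be an even integer and let z₂, …, z_d ∈ ℂ with |z_j| = 1 for all j. Then the matrix P_d(z₂,…,z_d) is Hermitian positive semidefinite of rank d−1 (corank one), and its kernel is spanned by the vector whose j-th entry is (−1)^{j−1} z_j⁻¹ (with z₁ = 1), i.e. the vector (1, −z₂⁻¹, z₃⁻¹, −z₄⁻¹, …, −z_d⁻¹)ᵀ ∈ ℂ^d. -/

import Mathlib

open scoped ComplexOrder Matrix

/-- The matrix `P_d(z₂,…,z_d)` (with `z₁ = 1` supplied through the function `z`),
indexed by `Fin d`, where position `j : Fin d` corresponds to the 1-based index `j.val + 1`. -/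
noncomputable def Pmat (d : ℕ) (z : ℕ → ℂ) : Matrix (Fin d) (Fin d) ℂ :=
  Matrix.of fun j k =>
    let a := j.val + 1
    let b := k.val + 1
    if a = b then 2
    else if b = a + 1 then z b * (z a)⁻¹
    else if a = b + 1 then z b * (z a)⁻¹
    else if a = 1 ∧ b = d then z d
    else if a = d ∧ b = 1 then (z d)⁻¹
    else 0

namespace Stmt5Aux

/-- cyclic successor on `Fin d` -/
def sft {d : ℕ} (j : Fin d) : Fin d :=
  if h : j.val + 1 < d then ⟨j.val + 1, h⟩ else ⟨0, j.pos⟩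

lemma sft_val {d : ℕ} (j : Fin d) :
    (sft j).val = if j.val + 1 < d then j.val + 1 else 0 := by
  unfold sft; split <;> simp

lemma sft_inj {d : ℕ} {j k : Fin d} (h : sft j = sft k) : j = k := by
  have h1 := sft_val j; have h2 := sft_val k
  have hv : (sft j).val = (sft k).val := by rw [h]
  have := j.isLt; have := k.isLt
  apply Fin.ext
  split_ifs at h1 h2 <;> omega

/-- cyclic predecessor on `Fin d` -/
def pre {d : ℕ} (k : Fin d) : Fin d :=
  if h : k.val = 0 then ⟨d - 1, by have := k.pos; omega⟩
  else ⟨k.val - 1, by have := k.isLt; omega⟩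

lemma pre_val {d : ℕ} (k : Fin d) :
    (pre k).val = if k.val = 0 then d - 1 else k.val - 1 := by
  unfold pre; split <;> simp [*]

lemma sft_pre {d : ℕ} (k : Fin d) : sft (pre k) = k := by
  have hk := k.isLt; have hk0 := k.pos
  apply Fin.ext
  rw [sft_val]
  unfold pre
  split <;> simp <;> split_ifs <;> omega

/-- the factor matrix: `B = Dᴴ (1 + S)`. -/
noncomputable def Bmat (d : ℕ) (z : ℕ → ℂ) : Matrix (Fin d) (Fin d) ℂ :=
  Matrix.of fun j k =>
    (z (j.val + 1))⁻¹ * ((if k = j then 1 else 0) + (if k = sft j then 1 else 0))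

lemma delta_sum {d : ℕ} (a b : Fin d) :
    (∑ l : Fin d, (if l = a then (1 : ℂ) else 0) * (if l = b then 1 else 0))
      = if a = b then 1 else 0 := by
  have h : ∀ l : Fin d, (if l = a then (1 : ℂ) else 0) * (if l = b then 1 else 0)
      = if l = a then (if a = b then (1 : ℂ) else 0) else 0 := by
    intro l
    by_cases h1 : l = a
    · subst h1; by_cases h2 : l = b <;> simp [h2]
    · simp [h1]
  simp only [h, Finset.sum_ite_eq', Finset.mem_univ, if_true]

lemma BBH {d : ℕ} (z : ℕ → ℂ) (j k : Fin d) :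
    (Bmat d z * (Bmat d z)ᴴ) j k =
      (z (j.val + 1))⁻¹ * (starRingEnd ℂ) ((z (k.val + 1))⁻¹) *
        (((if j = k then 1 else 0) + (if j = sft k then 1 else 0))
          + ((if sft j = k then 1 else 0) + (if j = k then 1 else 0))) := by
  rw [Matrix.mul_apply]
  have hrw : ∀ l : Fin d,
      Bmat d z j l * (Bmat d z)ᴴ l k =
        (z (j.val + 1))⁻¹ * (starRingEnd ℂ) ((z (k.val + 1))⁻¹) *
          (((if l = j then (1:ℂ) else 0) * (if l = k then 1 else 0)
            + (if l = j then (1:ℂ) else 0) * (if l = sft k then 1 else 0))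
          + ((if l = sft j then (1:ℂ) else 0) * (if l = k then 1 else 0)
            + (if l = sft j then 1 else 0) * (if l = sft k then 1 else 0))) := by
    intro l
    simp only [Bmat, Matrix.conjTranspose_apply, Matrix.of_apply, star_mul',
      star_add, star_one, star_zero, apply_ite (star : ℂ → ℂ), starRingEnd_apply]
    ring
  rw [Finset.sum_congr rfl fun l _ => hrw l, ← Finset.mul_sum]
  congr 1
  rw [Finset.sum_add_distrib, Finset.sum_add_distrib, Finset.sum_add_distrib,
    delta_sum, delta_sum, delta_sum, delta_sum]
  congr 1
  congr 1
  exact if_congr ⟨fun h => sft_inj h, fun h => by rw [h]⟩ rfl rfl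


section Main

variable {d : ℕ} {z : ℕ → ℂ}

lemma habs (hz1 : z 1 = 1) (hz : ∀ j, 2 ≤ j → j ≤ d → ‖z j‖ = 1) :
    ∀ m, m < d → ‖z (m + 1)‖ = 1 := by
  intro m hm
  rcases Nat.eq_zero_or_pos m with h0 | h0
  · subst h0; simp [hz1]
  · exact hz (m + 1) (by omega) (by omega)

lemma hne (hz1 : z 1 = 1) (hz : ∀ j, 2 ≤ j → j ≤ d → ‖z j‖ = 1) :
    ∀ m, m < d → z (m + 1) ≠ 0 := by
  intro m hm h
  have := habs hz1 hz m hm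
  rw [h] at this; simp at this

lemma hC (hz1 : z 1 = 1) (hz : ∀ j, 2 ≤ j → j ≤ d → ‖z j‖ = 1) :
    ∀ m, m < d → (starRingEnd ℂ) ((z (m + 1))⁻¹) = z (m + 1) := by
  intro m hm
  have h1 : (starRingEnd ℂ) (z (m + 1)) * z (m + 1) = 1 := by
    rw [mul_comm, Complex.mul_conj]
    norm_cast
    rw [Complex.normSq_eq_norm_sq, habs hz1 hz m hm]; norm_num
  have hcz : (starRingEnd ℂ) (z (m + 1)) = (z (m + 1))⁻¹ :=
    eq_inv_of_mul_eq_one_left h1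
  rw [map_inv₀, hcz, inv_inv]

lemma P_eq (hd : 4 ≤ d) (hz1 : z 1 = 1)
    (hz : ∀ j, 2 ≤ j → j ≤ d → ‖z j‖ = 1) :
    Pmat d z = Bmat d z * (Bmat d z)ᴴ := by
  ext j k
  rw [BBH, hC hz1 hz k.val k.isLt]
  have hj := j.isLt; have hk := k.isLt
  have hsjv := sft_val j
  have hskv := sft_val k
  simp only [Pmat, Matrix.of_apply, Fin.ext_iff, hsjv, hskv]
  rcases lt_or_ge (j.val + 1) d with hj1 | hj1 <;>
    rcases lt_or_ge (k.val + 1) d with hk1 | hk1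
  · simp only [if_pos hj1, if_pos hk1]
    (try split_ifs) <;>
      first
        | (exfalso; omega)
        | ring1
        | (rw [show (k.val + 1 : ℕ) = j.val + 1 from by omega,
            inv_mul_cancel₀ (hne hz1 hz j.val hj)]; norm_num)
        | (rw [show (k.val + 1 : ℕ) = 1 from by omega, hz1,
            show (j.val + 1 : ℕ) = d from by omega]; ring)
        | (rw [show (j.val + 1 : ℕ) = 1 from by omega, hz1,
            show (k.val + 1 : ℕ) = d from by omega]; ring)
  · simp only [if_pos hj1, if_neg (by omega : ¬ k.val + 1 < d)]
    (try split_ifs) <;>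
      first
        | (exfalso; omega)
        | ring1
        | (rw [show (k.val + 1 : ℕ) = j.val + 1 from by omega,
            inv_mul_cancel₀ (hne hz1 hz j.val hj)]; norm_num)
        | (rw [show (k.val + 1 : ℕ) = 1 from by omega, hz1,
            show (j.val + 1 : ℕ) = d from by omega]; ring)
        | (rw [show (j.val + 1 : ℕ) = 1 from by omega, hz1,
            show (k.val + 1 : ℕ) = d from by omega]; ring)
  · simp only [if_neg (by omega : ¬ j.val + 1 < d), if_pos hk1]
    (try split_ifs) <;>
      first
        | (exfalso; omega)
        | ring1
        | (rw [show (k.val + 1 : ℕ) = j.val + 1 from by omega,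
            inv_mul_cancel₀ (hne hz1 hz j.val hj)]; norm_num)
        | (rw [show (k.val + 1 : ℕ) = 1 from by omega, hz1,
            show (j.val + 1 : ℕ) = d from by omega]; ring)
        | (rw [show (j.val + 1 : ℕ) = 1 from by omega, hz1,
            show (k.val + 1 : ℕ) = d from by omega]; ring)
  · simp only [if_neg (by omega : ¬ j.val + 1 < d), if_neg (by omega : ¬ k.val + 1 < d)]
    (try split_ifs) <;>
      first
        | (exfalso; omega)
        | ring1
        | (rw [show (k.val + 1 : ℕ) = j.val + 1 from by omega,
            inv_mul_cancel₀ (hne hz1 hz j.val hj)]; norm_num)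
        | (rw [show (k.val + 1 : ℕ) = 1 from by omega, hz1,
            show (j.val + 1 : ℕ) = d from by omega]; ring)
        | (rw [show (j.val + 1 : ℕ) = 1 from by omega, hz1,
            show (k.val + 1 : ℕ) = d from by omega]; ring)

lemma sft_ne {d : ℕ} (hd : 2 ≤ d) (j : Fin d) : sft j ≠ j := by
  intro h
  have hv := sft_val j
  rw [h] at hv
  have := j.isLt
  split_ifs at hv <;> omega

lemma pre_ne {d : ℕ} (hd : 2 ≤ d) (k : Fin d) : pre k ≠ k := by
  intro h
  have := sft_pre k
  rw [h] at this
  exact sft_ne hd k this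

lemma pre_iff {d : ℕ} {k l : Fin d} : k = sft l ↔ l = pre k := by
  constructor
  · intro h
    exact sft_inj (h ▸ (sft_pre k).symm)
  · rintro rfl
    exact (sft_pre k).symm

lemma BH_mulVec {d : ℕ} (hd : 4 ≤ d) (z : ℕ → ℂ) (x : Fin d → ℂ) (k : Fin d) :
    ((Bmat d z)ᴴ.mulVec x) k =
      (starRingEnd ℂ) ((z (k.val + 1))⁻¹) * x k
        + (starRingEnd ℂ) ((z ((pre k).val + 1))⁻¹) * x (pre k) := by
  have hrw : ∀ l : Fin d, (Bmat d z)ᴴ k l * x l =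
      (if l = k then (starRingEnd ℂ) ((z (k.val + 1))⁻¹) * x k else 0)
      + (if l = pre k then (starRingEnd ℂ) ((z ((pre k).val + 1))⁻¹) * x (pre k) else 0) := by
    intro l
    simp only [Matrix.conjTranspose_apply, Bmat, Matrix.of_apply, star_mul', star_add,
      apply_ite (star : ℂ → ℂ), star_one, star_zero, starRingEnd_apply]
    by_cases h1 : l = k
    · subst h1
      rw [if_pos rfl, if_pos rfl, if_neg (fun h => sft_ne (by omega) l h.symm),
        if_neg (fun h => pre_ne (by omega) l h.symm)]
      ring
    · rw [if_neg (fun h : k = l => h1 h.symm), if_neg h1]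
      by_cases h2 : l = pre k
      · rw [if_pos (pre_iff.mpr h2), if_pos h2, h2]
        ring
      · rw [if_neg (fun h => h2 (pre_iff.mp h)), if_neg h2]
        ring
  rw [Matrix.mulVec, dotProduct, Finset.sum_congr rfl fun l _ => hrw l,
    Finset.sum_add_distrib, Finset.sum_ite_eq', Finset.sum_ite_eq']
  simp

end Main

end Stmt5Aux

theorem stmt5 (d : ℕ) (hd : 4 ≤ d) (hde : Even d) (z : ℕ → ℂ)
    (hz1 : z 1 = 1) (hz : ∀ j, 2 ≤ j → j ≤ d → ‖z j‖ = 1) :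
    (Pmat d z).PosSemidef ∧ (Pmat d z).rank = d - 1 ∧
    ∀ x : Fin d → ℂ, (Pmat d z).mulVec x = 0 ↔
      ∃ c : ℂ, x = c • (fun j : Fin d => (-1 : ℂ) ^ j.val * (z (j.val + 1))⁻¹) := by
  classical
  open Stmt5Aux in
  have hP := Stmt5Aux.P_eq (z := z) hd hz1 hz
  set v : Fin d → ℂ := fun j : Fin d => (-1 : ℂ) ^ j.val * (z (j.val + 1))⁻¹ with hv
  have hPSD : (Pmat d z).PosSemidef := by
    rw [hP]; exact Matrix.posSemidef_self_mul_conjTranspose _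
  have hker : ∀ x : Fin d → ℂ, (Pmat d z).mulVec x = 0 ↔ ∃ c : ℂ, x = c • v := by
    intro x
    have h1 : (Pmat d z).mulVec x = 0 ↔ (Bmat d z)ᴴ.mulVec x = 0 := by
      rw [hP]
      constructor
      · intro h
        have h2 : star ((Bmat d z)ᴴ.mulVec x) ⬝ᵥ ((Bmat d z)ᴴ.mulVec x) = 0 := by
          rw [Matrix.star_mulVec, Matrix.conjTranspose_conjTranspose,
            ← Matrix.dotProduct_mulVec, Matrix.mulVec_mulVec, h,
            dotProduct_zero]
        exact dotProduct_star_self_eq_zero.mp h2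
      · intro h
        rw [← Matrix.mulVec_mulVec, h, Matrix.mulVec_zero]
    rw [h1]
    constructor
    · intro h
      have hE : ∀ k : Fin d, z (k.val + 1) * x k = -(z ((pre k).val + 1) * x (pre k)) := by
        intro k
        have h0 := congrFun h k
        rw [BH_mulVec hd z x k, hC hz1 hz k.val k.isLt,
          hC hz1 hz (pre k).val (pre k).isLt, Pi.zero_apply] at h0
        linear_combination h0
      have key : ∀ n (hn : n < d), z (n + 1) * x ⟨n, hn⟩ = (-1) ^ n * x ⟨0, by omega⟩ := by
        intro n
        induction n with
        | zero => intro hn; simp [hz1]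
        | succ m ih =>
          intro hn
          have hm : m < d := by omega
          have hpre : pre ⟨m + 1, hn⟩ = (⟨m, hm⟩ : Fin d) := by
            apply Fin.ext
            rw [Stmt5Aux.pre_val]
            simp
          have h2 := hE ⟨m + 1, hn⟩
          rw [hpre] at h2
          simp only at h2 ⊢
          rw [h2, ih hm]
          ring
      refine ⟨x ⟨0, by omega⟩, ?_⟩
      funext j
      have h3 := key j.val j.isLt
      rw [Fin.eta] at h3
      have hzne : z (j.val + 1) ≠ 0 := hne hz1 hz j.val j.isLt
      have h4 : x j = (z (j.val + 1))⁻¹ * ((-1) ^ j.val * x ⟨0, by omega⟩) := by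
        rw [← h3]
        field_simp
      rw [h4]
      simp only [hv, Pi.smul_apply, smul_eq_mul]
      ring
    · rintro ⟨c, rfl⟩
      funext k
      rw [Pi.zero_apply, BH_mulVec hd z _ k, hC hz1 hz k.val k.isLt,
        hC hz1 hz (pre k).val (pre k).isLt]
      have hk1 : z (k.val + 1) * ((c • v) k) = c * (-1) ^ k.val := by
        simp only [hv, Pi.smul_apply, smul_eq_mul]
        field_simp [hne hz1 hz k.val k.isLt]
      have hk2 : z ((pre k).val + 1) * ((c • v) (pre k)) = c * (-1) ^ (pre k).val := by
        simp only [hv, Pi.smul_apply, smul_eq_mul]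
        field_simp [hne hz1 hz (pre k).val (pre k).isLt]
      rw [hk1, hk2]
      have hpar : ((-1 : ℂ)) ^ ((pre k).val) = -(-1) ^ (k.val) := by
        have hkl := k.isLt
        rw [Stmt5Aux.pre_val]
        by_cases hk0 : (k : ℕ) = 0
        · rw [if_pos hk0, hk0, pow_zero]
          have hodd : Odd (d - 1) := by
            rcases hde with ⟨t, ht⟩; exact ⟨t - 1, by omega⟩
          rw [hodd.neg_one_pow]
        · rw [if_neg hk0]
          conv_rhs => rw [show (k : ℕ) = (k.val - 1) + 1 by omega, pow_succ]
          ring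
      rw [hpar]
      ring
  refine ⟨hPSD, ?_, hker⟩
  have hv0 : v ≠ 0 := by
    intro h0
    have h1 := congrFun h0 ⟨0, by omega⟩
    simp [hv, hz1] at h1
  have hkerSp : LinearMap.ker (Pmat d z).mulVecLin = Submodule.span ℂ {v} := by
    ext x
    rw [LinearMap.mem_ker, Matrix.mulVecLin_apply, hker x, Submodule.mem_span_singleton]
    exact ⟨fun ⟨c, hc⟩ => ⟨c, hc.symm⟩, fun ⟨c, hc⟩ => ⟨c, hc.symm⟩⟩
  have hrn := LinearMap.finrank_range_add_finrank_ker (Pmat d z).mulVecLin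
  rw [hkerSp, finrank_span_singleton hv0, Module.finrank_pi] at hrn
  have hrk : (Pmat d z).rank = Module.finrank ℂ (LinearMap.range (Pmat d z).mulVecLin) := rfl
  simp only [Fintype.card_fin] at hrn
  omega
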